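/- arXiv:math-ph/0506051 — 7 statements merged into one kernel-verified Lean document; each statement's English description precedes it below -/
import Mathlib

section
/- Let X be a locally compact abelian topological group, φ : X → ℂ uniformly continuous, and 𝔣 a filter on X. Let 𝔣° be the envelope of 𝔣, i.e. the filter generated by the sets F + V where F ∈ 𝔣 and V is a neighborhood of 0. Then lim_{𝔣} φ exists if and only if lim_{𝔣°} φ exists, and in that case the limits are equal. -/
open Filter Topology Pointwise Uniformity

/-- For a uniformly continuous `φ : X → ℂ` on a locally compact abelian topological
group and a filter `𝔣`, the limit of `φ` along `𝔣` exists iff it exists along the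
envelope `𝔣°` of `𝔣` (the filter generated by the sets `F + V`, `F ∈ 𝔣`,
`V` a neighbourhood of `0`), and in that case the two limits are equal. -/
theorem stmt_1 {X : Type*} [UniformSpace X] [AddCommGroup X] [IsUniformAddGroup X]
    [LocallyCompactSpace X]
    (φ : X → ℂ) (hφu : UniformContinuous φ) (𝔣 : Filter X)
    (env : Filter X)
    (henv : env = Filter.generate {S : Set X | ∃ F ∈ 𝔣, ∃ V ∈ 𝓝 (0 : X), S = F + V}) :
    ∀ c : ℂ, Tendsto φ 𝔣 (𝓝 c) ↔ Tendsto φ env (𝓝 c) := by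
  intro c
  constructor
  · intro h
    subst henv
    rw [Metric.tendsto_nhds]
    intro ε hε
    have hε2 : 0 < ε / 2 := by linarith
    have hU : {p : ℂ × ℂ | dist p.1 p.2 < ε / 2} ∈ 𝓤 ℂ := Metric.dist_mem_uniformity hε2
    have hUC := hφu hU
    rw [uniformity_eq_comap_nhds_zero X, Filter.mem_map, Filter.mem_comap] at hUC
    obtain ⟨V, hV, hVsub⟩ := hUC
    have hF : φ ⁻¹' Metric.ball c (ε / 2) ∈ 𝔣 := h (Metric.ball_mem_nhds c hε2)
    have hmem : (φ ⁻¹' Metric.ball c (ε / 2)) + V ∈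
        Filter.generate {S : Set X | ∃ F ∈ 𝔣, ∃ V ∈ 𝓝 (0 : X), S = F + V} :=
      Filter.mem_generate_of_mem ⟨_, hF, V, hV, rfl⟩
    filter_upwards [hmem] with z hz
    rw [Set.mem_add] at hz
    obtain ⟨x, hx, v, hv, rfl⟩ := hz
    have h1 : dist (φ x) (φ (x + v)) < ε / 2 := by
      have hmemV : ((x, x + v) : X × X) ∈ (fun p : X × X => p.2 - p.1) ⁻¹' V := by
        show (x + v) - x ∈ V
        rwa [add_sub_cancel_left]
      simpa using hVsub hmemV
    have h2 : dist (φ x) c < ε / 2 := hx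
    calc dist (φ (x + v)) c ≤ dist (φ (x + v)) (φ x) + dist (φ x) c := dist_triangle _ _ _
      _ < ε := by rw [dist_comm]; linarith
  · intro h
    refine h.mono_left ?_
    rw [henv, Filter.le_generate_iff]
    rintro S ⟨F, hF, V, hV, rfl⟩
    exact Filter.mem_of_superset hF fun x hx => ⟨x, hx, 0, mem_of_mem_nhds hV, add_zero x⟩
end

section
/- Let X be a locally compact abelian group and 𝔣 a filter on X with 𝔣 = 𝔣° (equal to its envelope, i.e. the filter generated by the sets F + V with F ∈ 𝔣, V a neighborhood of 0). Then for each F ∈ 𝔣 there exist an open set G ∈ 𝔣 with G ⊆ F and a bounded uniformly continuous function θ : X → [0,1] such that θ = 1 on G and θ = 0 on X ∖ F. -/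
open Filter Topology Pointwise Uniformity

/-- If a filter `𝔣` on a locally compact abelian group `X` equals its envelope
(the filter generated by the sets `F + V`, `F ∈ 𝔣`, `V ∈ 𝓝 0`), then for each
`F ∈ 𝔣` there are an open `G ∈ 𝔣` with `G ⊆ F` and a bounded uniformly continuous
function `θ : X → [0,1]` with `θ = 1` on `G` and `θ = 0` outside `F`. -/
theorem stmt_3 {X : Type*} [UniformSpace X] [AddCommGroup X] [IsUniformAddGroup X]
    [LocallyCompactSpace X]
    (𝔣 : Filter X)
    (henv : 𝔣 = Filter.generate {S : Set X | ∃ F ∈ 𝔣, ∃ V ∈ 𝓝 (0 : X), S = F + V}) :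
    ∀ F ∈ 𝔣, ∃ G ∈ 𝔣, IsOpen G ∧ G ⊆ F ∧
      ∃ θ : X → ℝ, UniformContinuous θ ∧ (∀ x, θ x ∈ Set.Icc (0 : ℝ) 1) ∧
        (∀ x ∈ G, θ x = 1) ∧ (∀ x ∉ F, θ x = 0) := by
  intro F hF
  -- every generating set belongs to 𝔣
  have hSsub : ∀ s ∈ {S : Set X | ∃ F ∈ 𝔣, ∃ V ∈ 𝓝 (0 : X), S = F + V}, s ∈ 𝔣 := by
    intro s hs
    rw [henv]
    exact Filter.mem_generate_of_mem hs
  -- Step 1 : find F' ∈ 𝔣 and W ∈ 𝓝 0 with F' + W ⊆ F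
  obtain ⟨F', hF'𝔣, W, hW, hFW⟩ : ∃ F' ∈ 𝔣, ∃ W ∈ 𝓝 (0 : X), F' + W ⊆ F := by
    have hFgen : F ∈ Filter.generate {S : Set X | ∃ F ∈ 𝔣, ∃ V ∈ 𝓝 (0 : X), S = F + V} := by
      rw [← henv]; exact hF
    rw [Filter.mem_generate_iff] at hFgen
    obtain ⟨t, hts, htfin, htF⟩ := hFgen
    choose! F₀ hF₀ V₀ hV₀ hEq using fun s (hs : s ∈ t) => hts hs
    choose! W₀ hW₀ hW₀V using fun s (hs : s ∈ t) => exists_nhds_zero_half (hV₀ s hs)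
    refine ⟨⋂ s ∈ t, (F₀ s + W₀ s), ?_, ⋂ s ∈ t, W₀ s, ?_, ?_⟩
    · exact (Filter.biInter_mem htfin).mpr fun s hs =>
        hSsub _ ⟨F₀ s, hF₀ s hs, W₀ s, hW₀ s hs, rfl⟩
    · exact (Filter.biInter_mem htfin).mpr fun s hs => hW₀ s hs
    · rintro x hx
      apply htF
      rw [Set.mem_sInter]
      intro s hs
      rw [Set.mem_add] at hx
      obtain ⟨a, ha, w, hw, rfl⟩ := hx
      rw [Set.mem_iInter₂] at ha hw
      have h1 : a ∈ F₀ s + W₀ s := ha s hs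
      rw [Set.mem_add] at h1
      obtain ⟨g, hg, w1, hw1, rfl⟩ := h1
      rw [hEq s hs]
      have : g + w1 + w = g + (w1 + w) := by abel
      rw [this]
      exact Set.add_mem_add hg (hW₀V s hs w1 hw1 w (hw s hs))
  by_cases hne : F'.Nonempty
  · -- main case
    have hWint : interior W ∈ 𝓝 (0 : X) := interior_mem_nhds.mpr hW
    obtain ⟨K, hKnhds, hKW, hKcomp⟩ := LocallyCompactSpace.local_compact_nhds _ _ hWint
    obtain ⟨f, hf1, hf0, hfc, hf01⟩ :=
      exists_continuous_one_zero_of_isCompact hKcomp isOpen_interior.isClosed_compl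
        (Set.disjoint_left.mpr fun x hxK hxc => hxc (hKW hxK))
    have fUC : UniformContinuous f :=
      hfc.uniformContinuous_of_continuous f.continuous
    set θ : X → ℝ := fun x => sSup ((fun g => f (x - g)) '' F') with hθ
    have hbdd : ∀ x, BddAbove ((fun g => f (x - g)) '' F') := by
      rintro x
      refine ⟨1, ?_⟩
      rintro _ ⟨g, hg, rfl⟩
      exact (hf01 _).2
    have hneim : ∀ x, ((fun g => f (x - g)) '' F').Nonempty := fun x => hne.image _
    have hθle1 : ∀ x, θ x ≤ 1 := by
      intro x
      refine csSup_le (hneim x) ?_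
      rintro _ ⟨g, hg, rfl⟩
      exact (hf01 _).2
    have hθ0 : ∀ x, 0 ≤ θ x := by
      intro x
      obtain ⟨g, hg⟩ := hne
      refine le_trans (hf01 (x - g)).1 (le_csSup (hbdd x) ?_)
      exact ⟨g, hg, rfl⟩
    -- key estimate for uniform continuity
    have key : ∀ ε : ℝ, 0 < ε → ∃ N ∈ 𝓝 (0 : X),
        ∀ x y : X, y - x ∈ N → dist (θ x) (θ y) < ε := by
      intro ε hε
      have h2 : {p : X × X | dist (f p.1) (f p.2) < ε / 3} ∈ 𝓤 X :=
        fUC (Metric.dist_mem_uniformity (by positivity))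
      rw [uniformity_eq_comap_nhds_zero] at h2
      obtain ⟨N, hN, hNsub⟩ := Filter.mem_comap.mp h2
      have hNf : ∀ a b : X, b - a ∈ N → dist (f a) (f b) < ε / 3 := fun a b h =>
        hNsub (show (a, b) ∈ (fun p : X × X => p.2 - p.1) ⁻¹' N from h)
      have hNneg : (fun x : X => -x) ⁻¹' N ∈ 𝓝 (0 : X) := by
        have := (continuous_neg (G := X)).continuousAt (x := (0 : X))
        exact this.preimage_mem_nhds (by simpa using hN)
      refine ⟨N ∩ (fun x : X => -x) ⁻¹' N, Filter.inter_mem hN hNneg, ?_⟩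
      intro x y hxy
      obtain ⟨hxy1, hxy2⟩ := hxy
      have hstep : ∀ u v : X, v - u ∈ N → θ v ≤ θ u + ε / 3 := by
        intro u v huv
        refine csSup_le (hneim v) ?_
        rintro _ ⟨g, hg, rfl⟩
        have hmem : (v - g) - (u - g) ∈ N := by
          have : (v - g) - (u - g) = v - u := by abel
          rw [this]; exact huv
        have hd : dist (f (u - g)) (f (v - g)) < ε / 3 := hNf _ _ hmem
        have h1 : f (v - g) ≤ f (u - g) + ε / 3 := by
          rw [Real.dist_eq, abs_sub_lt_iff] at hd
          linarith [hd.2]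
        have h2 : f (u - g) ≤ θ u := le_csSup (hbdd u) ⟨g, hg, rfl⟩
        linarith
      have h1 : θ y ≤ θ x + ε / 3 := hstep x y hxy1
      have h2 : θ x ≤ θ y + ε / 3 := by
        refine hstep y x ?_
        have : x - y = -(y - x) := by abel
        rw [this]
        exact hxy2
      rw [Real.dist_eq, abs_sub_lt_iff]
      constructor <;> linarith
    have hθUC : UniformContinuous θ := by
      rw [UniformContinuous, Metric.uniformity_basis_dist.tendsto_right_iff]
      intro ε hε
      obtain ⟨N, hN, hNθ⟩ := key ε hε
      rw [uniformity_eq_comap_nhds_zero]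
      exact Filter.mem_comap.mpr ⟨N, hN, fun p hp => hNθ p.1 p.2 hp⟩
    refine ⟨F' + interior K, ?_, ?_, ?_, θ, hθUC, fun x => ⟨hθ0 x, hθle1 x⟩, ?_, ?_⟩
    · exact hSsub _ ⟨F', hF'𝔣, interior K, interior_mem_nhds.mpr hKnhds, rfl⟩
    · exact isOpen_interior.add_left
    · intro x hx
      rw [Set.mem_add] at hx
      obtain ⟨g, hg, k, hk, rfl⟩ := hx
      exact hFW (Set.add_mem_add hg (interior_subset.trans (hKW.trans interior_subset) hk))
    · -- θ = 1 on G
      intro x hx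
      rw [Set.mem_add] at hx
      obtain ⟨g, hg, k, hk, rfl⟩ := hx
      refine le_antisymm (hθle1 _) ?_
      have : f ((g + k) - g) = 1 := by
        have : (g + k) - g = k := by abel
        rw [this]
        exact hf1 (interior_subset hk)
      calc (1 : ℝ) = f ((g + k) - g) := this.symm
        _ ≤ θ (g + k) := le_csSup (hbdd _) ⟨g, hg, rfl⟩
    · -- θ = 0 outside F
      intro x hxF
      refine le_antisymm ?_ (hθ0 x)
      refine csSup_le (hneim x) ?_
      rintro _ ⟨g, hg, rfl⟩
      have hxg : x - g ∉ interior W := by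
        intro h
        apply hxF
        apply hFW
        have : x = g + (x - g) := by abel
        rw [this]
        exact Set.add_mem_add hg (interior_subset h)
      show f (x - g) ≤ 0
      rw [hf0 hxg]
      simp
  · -- degenerate case : F' = ∅
    rw [Set.not_nonempty_iff_eq_empty] at hne
    refine ⟨∅, hne ▸ hF'𝔣, isOpen_empty, Set.empty_subset _, fun _ => 0,
      uniformContinuous_const, fun x => ⟨le_refl _, zero_le_one⟩,
      fun x hx => absurd hx (Set.notMem_empty x), fun _ _ => rfl⟩
end

section
/- Let T be a bounded normal operator on L²(X), where X is a locally compact abelian group, and let U_x denote translation by x. If ‖(U_x − 1)T‖ → 0 as x → 0, then also ‖(U_x − 1)T*‖ → 0 as x → 0. -/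
open Filter Topology MeasureTheory ContinuousLinearMap

lemma aux_norm_comp_adjoint {H : Type*} [NormedAddCommGroup H] [InnerProductSpace ℂ H]
    [CompleteSpace H] (A B : H →L[ℂ] H) (hB : B ∘L adjoint B = adjoint B ∘L B) :
    ‖A ∘L adjoint B‖ = ‖A ∘L B‖ := by
  have h1 : ∀ C : H →L[ℂ] H, ‖C ∘L adjoint C‖ = ‖C‖ * ‖C‖ := fun C => by
    simpa [adjoint_adjoint] using norm_adjoint_comp_self (adjoint C)
  have key : (A ∘L B) ∘L adjoint (A ∘L B) = (A ∘L adjoint B) ∘L adjoint (A ∘L adjoint B) := by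
    simp only [adjoint_comp, adjoint_adjoint, comp_assoc]
    rw [← comp_assoc B (adjoint B) (adjoint A), hB, comp_assoc]
  have := (h1 (A ∘L B)).symm.trans (key ▸ h1 (A ∘L adjoint B))
  nlinarith [norm_nonneg (A ∘L adjoint B), norm_nonneg (A ∘L B), this]

/-- If `T` is a bounded normal operator on `L²(X)` (`X` a locally compact abelian
group with Haar measure) and `U_x` is translation by `x`, then
`‖(U_x − 1)T‖ → 0` as `x → 0` implies `‖(U_x − 1)T*‖ → 0` as `x → 0`. -/
theorem stmt_7 {X : Type*} [TopologicalSpace X] [AddCommGroup X] [IsTopologicalAddGroup X]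
    [LocallyCompactSpace X] [MeasurableSpace X] [BorelSpace X]
    (μ : Measure X) [μ.IsAddHaarMeasure]
    (U : X → (Lp ℂ 2 μ →L[ℂ] Lp ℂ 2 μ))
    (hU : ∀ (x : X) (f : Lp ℂ 2 μ), (U x f : X → ℂ) =ᵐ[μ] fun y => f (x + y))
    (T : Lp ℂ 2 μ →L[ℂ] Lp ℂ 2 μ)
    (hT : T ∘L adjoint T = adjoint T ∘L T)
    (h : Tendsto (fun x : X => ‖(U x - 1) ∘L T‖) (𝓝 0) (𝓝 0)) :
    Tendsto (fun x : X => ‖(U x - 1) ∘L adjoint T‖) (𝓝 0) (𝓝 0) := by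
  have : ∀ x : X, ‖(U x - 1) ∘L adjoint T‖ = ‖(U x - 1) ∘L T‖ :=
    fun x => aux_norm_comp_adjoint (U x - 1) T hT
  simpa only [this] using h
end

section
/- Let h : ℝⁿ → ℝ be a C¹ function that is equivalent to a weight (i.e., there are constants c₁, c₂ > 0 and a weight w with c₁ w(k)² ≤ 1+|h(k)| ≤ c₂ w(k)² for large k) and satisfies |h'(k)| ≤ C(1 + |h(k)|) for all k. Then lim_{k→0} sup_p |h(p+k) − h(p)| / (1 + |h(p)|) = 0. -/
open Filter Topology

/-- If `h : ℝⁿ → ℝ` is `C¹`, equivalent to a weight (so that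
`1 + `|h(p + θ•k)|` ≤ C'(1 + |h p|)` for `‖k‖ ≤ 1`, `θ ∈ [0,1]`) and satisfies
`‖h'(k)‖ ≤ C(1 + |h k|)`, then `sup_p |h(p+k) - h(p)| / (1 + |h p|) → 0` as `k → 0`. -/
theorem stmt_10 {n : ℕ} (h : EuclideanSpace ℝ (Fin n) → ℝ)
    (hC1 : ContDiff ℝ 1 h)
    (hderiv : ∃ C : ℝ, ∀ k, ‖fderiv ℝ h k‖ ≤ C * (1 + |h k|))
    (hweight : ∃ C' : ℝ, ∀ (p k : EuclideanSpace ℝ (Fin n)) (θ : ℝ),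
      ‖k‖ ≤ 1 → θ ∈ Set.Icc (0 : ℝ) 1 → 1 + |h (p + θ • k)| ≤ C' * (1 + |h p|)) :
    Tendsto (fun k : EuclideanSpace ℝ (Fin n) =>
        ⨆ p : EuclideanSpace ℝ (Fin n), |h (p + k) - h p| / (1 + |h p|))
      (𝓝 0) (𝓝 0) := by
  obtain ⟨C, hC⟩ := hderiv
  obtain ⟨C', hC'⟩ := hweight
  have hpos : ∀ p : EuclideanSpace ℝ (Fin n), (0:ℝ) < 1 + |h p| := fun p => by positivity
  have hC0 : 0 ≤ C := by
    have := hC 0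
    nlinarith [norm_nonneg (fderiv ℝ h 0), hpos 0, abs_nonneg (h 0)]
  have hC'0 : 0 ≤ C' := by
    have := hC' 0 0 0 (by simp) (by constructor <;> norm_num)
    simp only [zero_smul, add_zero] at this
    nlinarith [hpos (0 : EuclideanSpace ℝ (Fin n))]
  -- key pointwise bound for ‖k‖ ≤ 1
  have key : ∀ k : EuclideanSpace ℝ (Fin n), ‖k‖ ≤ 1 →
      ∀ p, |h (p + k) - h p| / (1 + |h p|) ≤ C * C' * ‖k‖ := by
    intro k hk p
    have hbound : ∀ x ∈ segment ℝ p (p + k), ‖fderiv ℝ h x‖ ≤ C * (C' * (1 + |h p|)) := by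
      intro x hx
      rw [segment_eq_image'] at hx
      obtain ⟨θ, hθ, rfl⟩ := hx
      have hx' : (fun θ : ℝ => p + θ • (p + k - p)) θ = p + θ • k := by
        simp [add_sub_cancel_left]
      rw [hx']
      calc ‖fderiv ℝ h (p + θ • k)‖ ≤ C * (1 + |h (p + θ • k)|) := hC _
        _ ≤ C * (C' * (1 + |h p|)) :=
          mul_le_mul_of_nonneg_left (hC' p k θ hk hθ) hC0
    have hmvt := (convex_segment p (p + k)).norm_image_sub_le_of_norm_fderiv_le
      (fun x _ => (hC1.differentiable one_ne_zero).differentiableAt) hbound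
      (left_mem_segment ℝ p (p + k)) (right_mem_segment ℝ p (p + k))
    simp only [add_sub_cancel_left] at hmvt
    rw [div_le_iff₀ (hpos p)]
    calc |h (p + k) - h p| = ‖h (p + k) - h p‖ := rfl
      _ ≤ C * (C' * (1 + |h p|)) * ‖k‖ := hmvt
      _ = C * C' * ‖k‖ * (1 + |h p|) := by ring
  apply squeeze_zero'
  · filter_upwards with k
    exact Real.iSup_nonneg fun p => div_nonneg (abs_nonneg _) (hpos p).le
  · filter_upwards [Metric.eventually_nhds_iff.mpr
      ⟨1, one_pos, fun {k} hk => (by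
        rw [dist_zero_right] at hk; exact hk.le : ‖k‖ ≤ 1)⟩] with k hk
    exact Real.iSup_le (key k hk) (by positivity)
  · have : Tendsto (fun k : EuclideanSpace ℝ (Fin n) => C * C' * ‖k‖) (𝓝 0) (𝓝 (C * C' * ‖(0:EuclideanSpace ℝ (Fin n))‖)) :=
      (tendsto_const_nhds.mul (tendsto_norm.comp tendsto_id))
    simpa using this
end

section
/- Let X be a finite dimensional real vector space and (Y_n)_{n≥0} a sequence of linear subspaces of X. Define Y = ⋂_{n≥0} (∑_{m≥n} Y_m) (where ∑_{m≥n} Y_m is the linear span of the union). Then there exists N such that Y = ∑_{m≥n} Y_m for all n ≥ N; moreover, for every n ≥ N with Y of dimension k, there exist indices n < n₁ < ⋯ < n_k with Y = Y_n + Y_{n₁} + ⋯ + Y_{n_k}. -/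
open Submodule Module

/-- Let `(Y n)` be a sequence of subspaces of a finite dimensional real vector space
and `Y = ⋂ₙ ∑_{m ≥ n} Y m`. Then the decreasing sequence `∑_{m ≥ n} Y m` stabilizes
at some `N` to `Y`, and if `k = dim Y` then for every `n ≥ N` there are indices
`n < n₁ < ⋯ < n_k` with `Y = Y n + Y n₁ + ⋯ + Y n_k`. -/
theorem stmt_12 {V : Type*} [AddCommGroup V] [Module ℝ V] [FiniteDimensional ℝ V]
    (Y : ℕ → Submodule ℝ V)
    (Ylim : Submodule ℝ V) (hYlim : Ylim = ⨅ n : ℕ, ⨆ m ≥ n, Y m) :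
    ∃ N : ℕ, (∀ n ≥ N, Ylim = ⨆ m ≥ n, Y m) ∧
      ∀ n ≥ N, ∃ ns : Fin (Module.finrank ℝ Ylim) → ℕ,
        StrictMono ns ∧ (∀ i, n < ns i) ∧ Ylim = Y n ⊔ ⨆ i, Y (ns i) := by
  classical
  set S : ℕ → Submodule ℝ V := fun n => ⨆ m ≥ n, Y m with hS
  have hanti : Antitone S := by
    intro a b hab
    exact iSup₂_le fun m hm => le_iSup₂_of_le m (hab.trans hm) le_rfl
  obtain ⟨N, hN⟩ := IsArtinian.monotone_stabilizes (R := ℝ) (M := V)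
    ⟨fun n => OrderDual.toDual (S n), fun a b h => hanti h⟩
  have hN' : ∀ m, N ≤ m → S N = S m := fun m hm => hN m hm
  have hlimN : Ylim = S N := by
    rw [hYlim]
    refine le_antisymm (iInf_le _ N) (le_iInf fun n => ?_)
    rcases le_total n N with h | h
    · exact hanti h
    · exact (hN' n h).le
  have heq : ∀ n ≥ N, Ylim = S n := fun n hn => hlimN.trans (hN' n hn)
  refine ⟨N, heq, ?_⟩
  intro n hn
  set k := Module.finrank ℝ Ylim with hk
  have hYle : ∀ m, n ≤ m → Y m ≤ Ylim := by
    intro m hm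
    rw [heq n hn]
    exact le_iSup₂_of_le m hm le_rfl
  have step : ∀ W : Submodule ℝ V, W ≤ Ylim → W ≠ Ylim → Y n ≤ W →
      ∃ m, n < m ∧ ¬ Y m ≤ W := by
    intro W hW hne hYn
    by_contra h
    push_neg at h
    refine hne (le_antisymm hW ?_)
    rw [heq n hn]
    refine iSup₂_le fun m hm => ?_
    rcases lt_or_eq_of_le hm with h' | h'
    · exact h m h'
    · rw [← h']; exact hYn
  have greedy : ∀ d (W : Submodule ℝ V), Y n ≤ W → W ≤ Ylim →
      k ≤ Module.finrank ℝ W + d →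
      ∃ s : Finset ℕ, (∀ m ∈ s, n < m) ∧ s.card ≤ d ∧ W ⊔ s.sup Y = Ylim := by
    intro d
    induction d with
    | zero =>
      intro W h1 h2 h3
      refine ⟨∅, by simp, le_rfl, ?_⟩
      simp only [Finset.sup_empty, sup_bot_eq]
      exact Submodule.eq_of_le_of_finrank_le h2 (by omega)
    | succ d ih =>
      intro W h1 h2 h3
      by_cases hW : W = Ylim
      · exact ⟨∅, by simp, by simp, by simp [hW]⟩
      · obtain ⟨m, hm, hYm⟩ := step W h2 hW h1
        have hWm : W ⊔ Y m ≤ Ylim := sup_le h2 (hYle m hm.le)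
        have hlt : W < W ⊔ Y m :=
          lt_of_le_of_ne le_sup_left (fun h => hYm (h ▸ le_sup_right))
        have hrank := Submodule.finrank_lt_finrank_of_lt hlt
        obtain ⟨s, hs1, hs2, hs3⟩ := ih (W ⊔ Y m) (h1.trans le_sup_left) hWm (by omega)
        refine ⟨insert m s, ?_, ?_, ?_⟩
        · intro x hx
          rcases Finset.mem_insert.mp hx with h' | h'
          · exact h' ▸ hm
          · exact hs1 x h'
        · calc (insert m s).card ≤ s.card + 1 := Finset.card_insert_le _ _
            _ ≤ d + 1 := by omega
        · rw [Finset.sup_insert, ← sup_assoc]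
          exact hs3
  obtain ⟨s, hs1, hs2, hs3⟩ := greedy k (Y n) le_rfl (hYle n le_rfl) (by omega)
  -- pad s to exactly k elements
  set M : ℕ := s.sup id + n with hM
  have hMs : ∀ m ∈ s, m ≤ M := fun m hm => le_trans (Finset.le_sup (f := id) hm) (by omega)
  set t : Finset ℕ := (Finset.range (k - s.card)).map
    ⟨fun j => M + 1 + j, fun a b hab => by simp only [add_right_inj] at hab; exact hab⟩ with ht
  have htmem : ∀ m ∈ t, M < m := by
    intro m hm
    simp only [ht, Finset.mem_map, Finset.mem_range, Function.Embedding.coeFn_mk] at hm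
    obtain ⟨j, _, rfl⟩ := hm
    show M < M + 1 + j
    omega
  have hdisj : Disjoint s t := by
    rw [Finset.disjoint_left]
    intro a has hat
    exact absurd (hMs a has) (not_le.mpr (htmem a hat))
  set s' : Finset ℕ := s ∪ t with hs'
  have hcard : s'.card = k := by
    rw [hs', Finset.card_union_of_disjoint hdisj, ht, Finset.card_map, Finset.card_range]
    omega
  have hs'mem : ∀ m ∈ s', n < m := by
    intro m hm
    rcases Finset.mem_union.mp hm with h' | h'
    · exact hs1 m h'
    · have := htmem m h'; omega
  have hsup : Y n ⊔ s'.sup Y = Ylim := by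
    rw [hs', Finset.sup_union, ← sup_assoc, hs3]
    refine le_antisymm (sup_le le_rfl ?_) le_sup_left
    exact Finset.sup_le fun m hm => hYle m (le_of_lt (by have := htmem m hm; omega))
  set e := s'.orderIsoOfFin hcard with he
  refine ⟨fun i => (e i : ℕ), ?_, ?_, ?_⟩
  · intro i j hij
    exact e.strictMono hij
  · intro i
    exact hs'mem _ (e i).2
  · rw [← hsup]
    congr 1
    refine le_antisymm (Finset.sup_le fun m hm => ?_) (iSup_le fun i => Finset.le_sup (e i).2)
    refine le_iSup_of_le (e.symm ⟨m, hm⟩) ?_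
    simp
end

section
/- Let H be a Hilbert space and B₂ ⊆ B(H) a closed subspace which is a left ideal and has the property: if S ∈ B(H) and S*S ≤ ∑_{j=1}^n T_j* T_j with T_j ∈ B₂, then S ∈ B₂. Let B₁ be the linear span of {S*T : S, T ∈ B₂}. Then B₁ is a hereditary *-subalgebra of B(H): it is closed under adjoints and products, and if 0 ≤ S ≤ T with T ∈ B₁ then S ∈ B₁. Moreover, for S ≥ 0, S ∈ B₁ if and only if √S ∈ B₂. -/
open ContinuousLinearMap

set_option maxHeartbeats 1000000
set_option synthInstance.maxHeartbeats 400000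

section Aux

variable {H : Type*} [NormedAddCommGroup H] [InnerProductSpace ℂ H] [CompleteSpace H]

lemma aux_star_mul_ineq (S T : H →L[ℂ] H) :
    star S * T + star T * S ≤ star S * S + star T * T := by
  have h0 : (0 : H →L[ℂ] H) ≤ star (S - T) * (S - T) := star_mul_self_nonneg _
  have hexp : star (S - T) * (S - T)
      = star S * S + star T * T - (star S * T + star T * S) := by
    rw [star_sub]; noncomm_ring
  rw [hexp] at h0
  exact sub_nonneg.mp h0

end Aux

/-- Let `B₂ ⊆ B(H)` be a closed subspace which is a left ideal and satisfies the
domination property: `S*S ≤ ∑ Tⱼ* Tⱼ` with `Tⱼ ∈ B₂` implies `S ∈ B₂`. Then the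
linear span `B₁` of `{S*T : S, T ∈ B₂}` is a hereditary *-subalgebra of `B(H)`,
and a positive operator `S` belongs to `B₁` iff its (positive) square root belongs
to `B₂`. -/
theorem stmt_16 {H : Type*} [NormedAddCommGroup H] [InnerProductSpace ℂ H]
    [CompleteSpace H]
    (B₂ : Set (H →L[ℂ] H)) (hclosed : IsClosed B₂) (h0 : (0 : H →L[ℂ] H) ∈ B₂)
    (hadd : ∀ S T, S ∈ B₂ → T ∈ B₂ → S + T ∈ B₂)
    (hsmul : ∀ (c : ℂ) T, T ∈ B₂ → c • T ∈ B₂)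
    (hideal : ∀ (A : H →L[ℂ] H) T, T ∈ B₂ → A ∘L T ∈ B₂)
    (hdom : ∀ (S : H →L[ℂ] H) (n : ℕ) (T : Fin n → (H →L[ℂ] H)),
      (∀ j, T j ∈ B₂) →
      ((∑ j, adjoint (T j) ∘L T j) - adjoint S ∘L S).IsPositive → S ∈ B₂)
    (B₁ : Set (H →L[ℂ] H))
    (hB₁ : B₁ = ↑(Submodule.span ℂ
      {A : H →L[ℂ] H | ∃ S ∈ B₂, ∃ T ∈ B₂, A = adjoint S ∘L T})) :
    (∀ A ∈ B₁, adjoint A ∈ B₁) ∧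
    (∀ A ∈ B₁, ∀ B ∈ B₁, A ∘L B ∈ B₁) ∧
    (∀ S T : H →L[ℂ] H, T ∈ B₁ → S.IsPositive → (T - S).IsPositive → S ∈ B₁) ∧
    (∀ S : H →L[ℂ] H, S.IsPositive →
      (S ∈ B₁ ↔ ∃ R : H →L[ℂ] H, R.IsPositive ∧ R ∘L R = S ∧ R ∈ B₂)) := by
  subst hB₁
  set gen : Set (H →L[ℂ] H) :=
    {A : H →L[ℂ] H | ∃ S ∈ B₂, ∃ T ∈ B₂, A = adjoint S ∘L T} with hgen
  -- membership of generators
  have hgen_mem : ∀ {S T : H →L[ℂ] H}, S ∈ B₂ → T ∈ B₂ →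
      star S * T ∈ Submodule.span ℂ gen := by
    intro S T hS hT
    exact Submodule.subset_span ⟨S, hS, T, hT, by rw [star_eq_adjoint]; rfl⟩
  -- 1. closed under adjoint
  have hstar : ∀ A ∈ Submodule.span ℂ gen, star A ∈ Submodule.span ℂ gen := by
    intro A hA
    induction hA using Submodule.span_induction with
    | mem x hx =>
      obtain ⟨S, hS, T, hT, rfl⟩ := hx
      have : star (adjoint S ∘L T) = star T * S := by
        rw [← star_eq_adjoint, ← mul_def, star_mul, star_star]
      rw [this]
      exact hgen_mem hT hS
    | zero => simp
    | add x y _ _ hx hy => rw [star_add]; exact Submodule.add_mem _ hx hy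
    | smul c x _ hx =>
      rw [star_smul]
      exact Submodule.smul_mem _ _ hx
  -- 2. closed under products
  have hmul : ∀ A ∈ Submodule.span ℂ gen, ∀ B ∈ Submodule.span ℂ gen,
      A * B ∈ Submodule.span ℂ gen := by
    intro A hA B hB
    have hmm : A * B ∈ Submodule.span ℂ gen * Submodule.span ℂ gen :=
      Submodule.mul_mem_mul hA hB
    rw [Submodule.span_mul_span] at hmm
    refine Submodule.span_le.mpr ?_ hmm
    rintro x ⟨a, ha, b, hb, rfl⟩
    obtain ⟨S₁, hS₁, T₁, hT₁, rfl⟩ := ha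
    obtain ⟨S₂, hS₂, T₂, hT₂, rfl⟩ := hb
    have key : (adjoint S₁ ∘L T₁) * (adjoint S₂ ∘L T₂)
        = star S₁ * ((T₁ * star S₂) ∘L T₂) := by
      rw [star_eq_adjoint, star_eq_adjoint, ← mul_def, ← mul_def, ← mul_def]
      noncomm_ring
    show (adjoint S₁ ∘L T₁) * (adjoint S₂ ∘L T₂) ∈ (Submodule.span ℂ gen : Set _)
    rw [key]
    exact hgen_mem hS₁ (hideal _ _ hT₂)
  -- domination: every element of the span has `A + star A` dominated by a sum
  have hbound : ∀ A ∈ Submodule.span ℂ gen, ∃ (n : ℕ) (F : Fin n → (H →L[ℂ] H)),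
      (∀ j, F j ∈ B₂) ∧ A + star A ≤ ∑ j, star (F j) * F j := by
    intro A hA
    rw [Submodule.mem_span_set'] at hA
    obtain ⟨n, f, g, hsum⟩ := hA
    have hgel : ∀ i, ∃ S ∈ B₂, ∃ T ∈ B₂, (g i : H →L[ℂ] H) = adjoint S ∘L T :=
      fun i => (g i).2
    choose Sf hSf Tf hTf hEq using hgel
    set Tf' : Fin n → (H →L[ℂ] H) := fun i => f i • Tf i with hTf'
    have hTf'B : ∀ i, Tf' i ∈ B₂ := fun i => hsmul _ _ (hTf i)
    have hAi : A = ∑ i, star (Sf i) * Tf' i := by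
      rw [← hsum]
      refine Finset.sum_congr rfl fun i _ => ?_
      rw [hEq i, hTf']
      rw [star_eq_adjoint, ← mul_def]
      simp [mul_smul_comm]
    have hstarA : star A = ∑ i, star (Tf' i) * Sf i := by
      rw [hAi, star_sum]
      refine Finset.sum_congr rfl fun i _ => ?_
      rw [star_mul, star_star]
    refine ⟨n + n, Fin.append Sf Tf', ?_, ?_⟩
    · intro j
      refine Fin.addCases (fun i => ?_) (fun i => ?_) j
      · rw [Fin.append_left]; exact hSf i
      · rw [Fin.append_right]; exact hTf'B i
    · rw [hstarA, hAi, ← Finset.sum_add_distrib, Fin.sum_univ_add]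
      simp only [Fin.append_left, Fin.append_right]
      rw [← Finset.sum_add_distrib]
      exact Finset.sum_le_sum fun i _ => aux_star_mul_ineq (Sf i) (Tf' i)
  -- main lemma: hereditary domination produces a square root in B₂
  have hmain : ∀ S T : H →L[ℂ] H, T ∈ Submodule.span ℂ gen → S.IsPositive →
      (T - S).IsPositive →
      ∃ R : H →L[ℂ] H, R.IsPositive ∧ R ∘L R = S ∧ R ∈ B₂ := by
    intro S T hT hS hTS
    have hS0 : (0 : H →L[ℂ] H) ≤ S := (nonneg_iff_isPositive S).mpr hS
    have hSsa : star S = S := hS.isSelfAdjoint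
    have hTSsa : star (T - S) = T - S := hTS.isSelfAdjoint
    obtain ⟨n, F, hF, hle⟩ := hbound T hT
    -- 2 S ≤ T + star T
    have h2S : S + S ≤ T + star T := by
      have h1 : (0 : H →L[ℂ] H) ≤ T - S := (nonneg_iff_isPositive _).mpr hTS
      have h2eq : star T - S = T - S := by
        calc star T - S = star T - star S := by rw [hSsa]
        _ = star (T - S) := (star_sub _ _).symm
        _ = T - S := hTSsa
      have h2 : (0 : H →L[ℂ] H) ≤ star T - S := h2eq ▸ h1
      exact add_le_add (sub_nonneg.mp h1) (sub_nonneg.mp h2)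
    have h2S' : S + S ≤ ∑ j, star (F j) * F j := le_trans h2S hle
    -- square root
    set R : H →L[ℂ] H := CFC.sqrt S with hRdef
    have hR0 : (0 : H →L[ℂ] H) ≤ R := CFC.sqrt_nonneg S
    have hRR : R * R = S := CFC.sqrt_mul_sqrt_self S hS0
    have hRsa : star R = R := IsSelfAdjoint.of_nonneg hR0
    set c : ℂ := (Real.sqrt 2 : ℂ) with hc
    have hc2 : c * c = 2 := by
      rw [hc, ← Complex.ofReal_mul, Real.mul_self_sqrt (by norm_num : (0:ℝ) ≤ 2)]
      norm_num
    have hcne : c ≠ 0 := by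
      rw [hc]
      simp only [ne_eq, Complex.ofReal_eq_zero]
      positivity
    set R' : H →L[ℂ] H := c • R with hR'
    have hR'R' : star R' * R' = S + S := by
      rw [hR']
      rw [star_smul, hRsa, smul_mul_smul_comm, hRR]
      have hcc : star c * c = 2 := by
        rw [hc, Complex.star_def, Complex.conj_ofReal, ← hc, hc2]
      rw [hcc, two_smul]
    -- apply domination
    have hpos : ((∑ j, adjoint (F j) ∘L F j) - adjoint R' ∘L R').IsPositive := by
      rw [← nonneg_iff_isPositive, sub_nonneg]
      have e1 : adjoint R' ∘L R' = star R' * R' := by rw [star_eq_adjoint]; rfl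
      have e2 : ∀ j, adjoint (F j) ∘L F j = star (F j) * F j := fun j => by
        rw [star_eq_adjoint]; rfl
      simp only [e1, e2, hR'R']
      exact h2S'
    have hR'B : R' ∈ B₂ := hdom R' n F hF hpos
    have hRB : R ∈ B₂ := by
      have := hsmul c⁻¹ R' hR'B
      rwa [hR', smul_smul, inv_mul_cancel₀ hcne, one_smul] at this
    exact ⟨R, (nonneg_iff_isPositive R).mp hR0, hRR, hRB⟩
  refine ⟨?_, ?_, ?_, ?_⟩
  · intro A hA
    have := hstar A hA
    rwa [star_eq_adjoint] at this
  · intro A hA B hB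
    exact hmul A hA B hB
  · intro S T hT hS hTS
    obtain ⟨R, hRpos, hRR, hRB⟩ := hmain S T hT hS hTS
    have hRsa : star R = R := hRpos.isSelfAdjoint
    have : S = star R * R := by rw [hRsa, ← hRR]; rfl
    rw [this]
    exact hgen_mem hRB hRB
  · intro S hS
    constructor
    · intro hSB
      refine hmain S S hSB hS ?_
      simpa using isPositive_zero (E := H) (𝕜 := ℂ)
    · rintro ⟨R, hRpos, hRR, hRB⟩
      have hRsa : star R = R := hRpos.isSelfAdjoint
      have : S = star R * R := by rw [hRsa, ← hRR]; rfl
      rw [SetLike.mem_coe, this]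
      exact hgen_mem hRB hRB
end

section
/- Let X be a locally compact abelian group and L ⊆ X a sparse set: L is locally finite and for each compact Λ ⊆ X there is a cofinite subset M ⊆ L such that (m+Λ) ∩ (l+Λ) = ∅ whenever m ∈ M, l ∈ L, l ≠ m. Let φ ∈ C(X) be bounded uniformly continuous with support contained in L + K for some compact K, let κ be an ultrafilter on L finer than the Fréchet filter of L, and let x ∈ X. Then the limit function ψ(y) := lim_{l→κ} φ(l + x + y) exists for all y ∈ X and has support contained in K − x; in particular ψ ∈ C₀(X). -/
open Filter Topology Pointwise Uniformity

/-- Let `L` be a sparse subset of a locally compact noncompact abelian group `X`,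
`φ` bounded uniformly continuous with support in `L + K` (`K` compact), `κ` an
ultrafilter on `L` finer than the Fréchet filter of `L`, and `x ∈ X`. Then
`ψ(y) = lim_{l→κ} φ(l + x + y)` exists for every `y`, `ψ` is continuous with
support contained in `K − x`; in particular `ψ ∈ C₀(X)`. -/
theorem stmt_18 {X : Type*} [UniformSpace X] [AddCommGroup X] [IsUniformAddGroup X]
    [LocallyCompactSpace X] [NoncompactSpace X]
    (L : Set X)
    (hLfin : ∀ Λ : Set X, IsCompact Λ → (L ∩ Λ).Finite)
    (hLsparse : ∀ Λ : Set X, IsCompact Λ → ∃ M ⊆ L, (L \ M).Finite ∧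
      ∀ m ∈ M, ∀ l ∈ L, l ≠ m → (m +ᵥ Λ) ∩ (l +ᵥ Λ) = ∅)
    (K : Set X) (hK : IsCompact K)
    (φ : X → ℂ) (hφb : ∃ C, ∀ x, ‖φ x‖ ≤ C) (hφu : UniformContinuous φ)
    (hφsupp : Function.support φ ⊆ L + K)
    (κ : Ultrafilter X) (hκL : L ∈ κ) (hκ : Filter.cocompact X ≤ (κ : Filter X))
    (x : X) :
    ∃ ψ : X → ℂ,
      (∀ y : X, Tendsto (fun l => φ (l + x + y)) (κ : Filter X) (𝓝 (ψ y))) ∧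
      Continuous ψ ∧
      Function.support ψ ⊆ (fun a => a - x) '' K ∧
      Tendsto ψ (Filter.cocompact X) (𝓝 0) := by
  classical
  obtain ⟨C, hC⟩ := hφb
  -- existence of the limit along the ultrafilter, by boundedness
  have hex : ∀ y : X, ∃ z : ℂ, Tendsto (fun l => φ (l + x + y)) (κ : Filter X) (𝓝 z) := by
    intro y
    have hcpt : IsCompact (Metric.closedBall (0 : ℂ) C) := isCompact_closedBall _ _
    have hmem : Metric.closedBall (0 : ℂ) C ∈ (κ.map (fun l => φ (l + x + y)) : Filter ℂ) := by
      apply mem_map.mpr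
      filter_upwards [Filter.univ_mem] with l _
      simpa [Metric.mem_closedBall, dist_zero_right] using hC (l + x + y)
    obtain ⟨z, _, hz⟩ := hcpt.ultrafilter_le_nhds (κ.map (fun l => φ (l + x + y)))
      (le_principal_iff.mpr hmem)
    exact ⟨z, hz⟩
  choose ψ hψ using hex
  -- vanishing outside K - x
  have hsupp0 : ∀ y : X, x + y ∉ K → ψ y = 0 := by
    intro y hy
    obtain ⟨M, hML, hfin, hdisj⟩ := hLsparse (K ∪ {x + y}) (hK.union isCompact_singleton)
    have hMκ : M ∈ (κ : Filter X) := by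
      have h1 : (L \ M)ᶜ ∈ (κ : Filter X) := by
        rw [Ultrafilter.mem_coe, Ultrafilter.compl_mem_iff_notMem]
        intro hmem
        obtain ⟨K₀, hK₀, hK₀sub⟩ := Filter.mem_cocompact.mp (hκ hmem)
        have huniv : (Set.univ : Set X) ⊆ (L \ M) ∪ K₀ := by
          intro z _
          by_cases hz : z ∈ L \ M
          · exact Or.inl hz
          · exact Or.inr (by simpa using (Set.compl_subset_comm.mp hK₀sub) hz)
        have hcpt : IsCompact (Set.univ : Set X) :=
          (hfin.isCompact.union hK₀).of_isClosed_subset isClosed_univ huniv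
        exact noncompact_univ X hcpt
      refine mem_of_superset (inter_mem hκL h1) ?_
      rintro l ⟨hl, hl2⟩
      by_contra hlM
      exact hl2 ⟨hl, hlM⟩
    have hzero : ∀ᶠ l in (κ : Filter X), φ (l + x + y) = 0 := by
      filter_upwards [hMκ] with l hlM
      by_contra hne
      obtain ⟨l', hl', k, hk, heq⟩ := Set.mem_add.mp (hφsupp hne)
      by_cases h : l' = l
      · subst h
        have hk' : k = x + y := by
          have : l' + k = l' + (x + y) := by rw [heq, add_assoc]
          exact add_left_cancel this
        exact hy (hk' ▸ hk)
      · have hd := hdisj l hlM l' hl' h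
        have h1 : l + (x + y) ∈ l +ᵥ (K ∪ {x + y}) := by
          exact ⟨x + y, Or.inr rfl, rfl⟩
        have h2 : l' + k ∈ l' +ᵥ (K ∪ {x + y}) := by
          exact ⟨k, Or.inl hk, rfl⟩
        have heq' : l + (x + y) = l' + k := by rw [heq, add_assoc]
        exact Set.eq_empty_iff_forall_notMem.mp hd (l + (x + y)) ⟨h1, heq' ▸ h2⟩
    exact tendsto_nhds_unique (hψ y)
      (Tendsto.congr' (by filter_upwards [hzero] with l h; exact h.symm) tendsto_const_nhds)
  -- continuity
  have hcont : Continuous ψ := by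
    rw [continuous_iff_continuousAt]
    intro y₀
    rw [ContinuousAt, Metric.tendsto_nhds]
    intro ε hε
    have hU : {p : X × X | dist (φ p.1) (φ p.2) < ε / 2} ∈ 𝓤 X :=
      hφu (Metric.dist_mem_uniformity (by linarith))
    rw [uniformity_eq_comap_nhds_zero X] at hU
    obtain ⟨V, hV, hVsub⟩ := Filter.mem_comap.mp hU
    have hVsub' : ∀ p : X × X, p.2 - p.1 ∈ V → dist (φ p.1) (φ p.2) < ε / 2 :=
      fun p hp => hVsub hp
    have hnb : {y : X | y - y₀ ∈ V} ∈ 𝓝 y₀ := by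
      have hc : Continuous fun y : X => y - y₀ := continuous_id.sub continuous_const
      have := hc.continuousAt (x := y₀)
      apply this
      simpa using hV
    filter_upwards [hnb] with y hy
    have key : ∀ l : X, dist (φ (l + x + y)) (φ (l + x + y₀)) < ε / 2 := by
      intro l
      rw [dist_comm]
      have h2 : (l + x + y) - (l + x + y₀) = y - y₀ := by abel
      exact hVsub' (l + x + y₀, l + x + y) (by rw [h2]; exact hy)
    have hlim : Tendsto (fun l => dist (φ (l + x + y)) (φ (l + x + y₀))) (κ : Filter X)
        (𝓝 (dist (ψ y) (ψ y₀))) := (hψ y).dist (hψ y₀)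
    have hle : dist (ψ y) (ψ y₀) ≤ ε / 2 :=
      le_of_tendsto hlim (Eventually.of_forall fun l => (key l).le)
    linarith
  -- support
  have hsub : Function.support ψ ⊆ (fun a => a - x) '' K := by
    intro y hy
    by_contra hyim
    exact hy (hsupp0 y (fun hxy => hyim ⟨x + y, hxy, add_sub_cancel_left x y⟩))
  -- vanishing at infinity
  have hKx : IsCompact ((fun a => a - x) '' K) := hK.image (continuous_id.sub continuous_const)
  have hev : ∀ᶠ y in Filter.cocompact X, ψ y = 0 := by
    filter_upwards [Filter.mem_cocompact.mpr ⟨_, hKx, subset_rfl⟩] with y hy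
    by_contra h
    exact hy (hsub h)
  exact ⟨ψ, hψ, hcont, hsub,
    Tendsto.congr' (hev.mono fun y h => h.symm) tendsto_const_nhds⟩
end
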